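/- In the monoid S, for every l ∈ ℤ and every s ∈ S with b·x_l ∈ sS, the element s equals a^k for some k ≥ 0, or a^k·b for some k ≥ 0, or b·x_l. -/

import Mathlib

/-- The alphabet of the monoid `S`: letters `a`, `b` and `x n`, `y n` for `n : ℤ`. -/
inductive SGen : Type
  | a : SGen
  | b : SGen
  | x : ℤ → SGen
  | y : ℤ → SGen

/-- The defining relations of `S`: `a·b·x n = b·x n` and `a·b·y n = b·y (n+1)` for `n ∈ ℤ`. -/
inductive SRel : FreeMonoid SGen → FreeMonoid SGen → Prop
  | xr (n : ℤ) : SRel (.of .a * .of .b * .of (.x n)) (.of .b * .of (.x n))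
  | yr (n : ℤ) : SRel (.of .a * .of .b * .of (.y n)) (.of .b * .of (.y (n + 1)))

/-- The monoid `S` presented by the generators `SGen` and the relations `SRel`. -/
abbrev S : Type := PresentedMonoid SRel

/-- The images of the generators in `S`. -/
def gen (g : SGen) : S := PresentedMonoid.of SRel g

/-- The principal right ideal `sS` of a monoid. -/
def rIdeal {M : Type*} [Monoid M] (s : M) : Set M := {m | ∃ u, m = s * u}
/-- If `b·xₗ ∈ sS`, then `s = aᵏ` for some `k ≥ 0`, or `s = aᵏ·b` for some `k ≥ 0`,
or `s = b·xₗ`. -/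
def cons' : SGen → List SGen → List SGen
  | .a, .b :: .x n :: t => .b :: .x n :: t
  | .a, .b :: .y n :: t => .b :: .y (n+1) :: t
  | g, t => g :: t

def nf (w : List SGen) : List SGen := w.foldr cons' []

lemma cons'_foldr (g : SGen) (u t : List SGen) :
    cons' g (List.foldr cons' t u) = List.foldr cons' t (cons' g u) := by
  match g, u with
  | .b, u => rfl
  | .x n, u => rfl
  | .y n, u => rfl
  | .a, [] => rfl
  | .a, [g'] => cases g' <;> rfl
  | .a, .a :: g'' :: u'' => rfl
  | .a, .x m :: g'' :: u'' => rfl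
  | .a, .y m :: g'' :: u'' => rfl
  | .a, .b :: .a :: u'' => rfl
  | .a, .b :: .b :: u'' => rfl
  | .a, .b :: .x m :: u'' => rfl
  | .a, .b :: .y m :: u'' => rfl

lemma foldr_nf (w t : List SGen) :
    List.foldr cons' t w = List.foldr cons' t (nf w) := by
  induction w with
  | nil => rfl
  | cons g w ih =>
      show cons' g (List.foldr cons' t w) = List.foldr cons' t (cons' g (nf w))
      rw [ih, cons'_foldr]

lemma nf_append (u v : List SGen) :
    nf (u ++ v) = List.foldr cons' (nf v) (nf u) := by
  show List.foldr cons' [] (u ++ v) = _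
  rw [List.foldr_append]
  exact foldr_nf u (nf v)

/-- The congruence "same normal form". -/
def nfCon : Con (FreeMonoid SGen) where
  r w v := nf w.toList = nf v.toList
  iseqv := ⟨fun _ => rfl, Eq.symm, Eq.trans⟩
  mul' := by
    intro p q r t h1 h2
    show nf (p * r).toList = nf (q * t).toList
    rw [FreeMonoid.toList_mul, FreeMonoid.toList_mul, nf_append, nf_append, h1, h2]

lemma nf_eq_of_conGen {w v : FreeMonoid SGen} (h : conGen SRel w v) :
    nf w.toList = nf v.toList := by
  refine Con.le_def.mp ((Con.conGen_le (c := nfCon)).mpr (fun p q hpq => ?_)) h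
  cases hpq with
  | xr n => rfl
  | yr n => rfl

lemma cons'_ne_nil (g : SGen) (t : List SGen) : cons' g t ≠ [] := by
  match g, t with
  | .b, t => exact List.cons_ne_nil _ _
  | .x n, t => exact List.cons_ne_nil _ _
  | .y n, t => exact List.cons_ne_nil _ _
  | .a, [] => exact List.cons_ne_nil _ _
  | .a, [g'] => cases g' <;> exact List.cons_ne_nil _ _
  | .a, .a :: g'' :: u'' => exact List.cons_ne_nil _ _
  | .a, .x m :: g'' :: u'' => exact List.cons_ne_nil _ _
  | .a, .y m :: g'' :: u'' => exact List.cons_ne_nil _ _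
  | .a, .b :: .a :: u'' => exact List.cons_ne_nil _ _
  | .a, .b :: .b :: u'' => exact List.cons_ne_nil _ _
  | .a, .b :: .x m :: u'' => exact List.cons_ne_nil _ _
  | .a, .b :: .y m :: u'' => exact List.cons_ne_nil _ _

lemma nf_ne_nil (g : SGen) (u : List SGen) : nf (g :: u) ≠ [] := cons'_ne_nil g (nf u)

lemma nf_eq_x (l : ℤ) : ∀ u : List SGen, nf u = [.x l] → u = [.x l] := by
  intro u
  match u with
  | [] => intro h; exact absurd h (by simp [nf])
  | .b :: u' =>
      intro h
      have h' : SGen.b :: nf u' = [.x l] := h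
      simp at h'
  | .x m :: u' =>
      intro h
      have h' : SGen.x m :: nf u' = [.x l] := h
      obtain ⟨h1, h2⟩ := List.cons_eq_cons.mp h'
      cases u' with
      | nil => rw [h1]
      | cons g u'' => exact absurd h2 (nf_ne_nil g u'')
  | .y m :: u' =>
      intro h
      have h' : SGen.y m :: nf u' = [.x l] := h
      simp at h'
  | .a :: u' =>
      intro h
      have h' : cons' .a (nf u') = [.x l] := h
      exfalso
      -- head of cons' .a t is .a or .b
      revert h'
      match hm : nf u' with
      | [] => intro h'; simp [cons'] at h'
      | [g'] => intro h'; cases g' <;> simp [cons'] at h'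
      | .a :: g'' :: u'' => intro h'; simp [cons'] at h'
      | .x m :: g'' :: u'' => intro h'; simp [cons'] at h'
      | .y m :: g'' :: u'' => intro h'; simp [cons'] at h'
      | .b :: .a :: u'' => intro h'; simp [cons'] at h'
      | .b :: .b :: u'' => intro h'; simp [cons'] at h'
      | .b :: .x m :: u'' => intro h'; simp [cons'] at h'
      | .b :: .y m :: u'' => intro h'; simp [cons'] at h'

lemma nf_eq_bx (l : ℤ) : ∀ u : List SGen, nf u = [.b, .x l] →
    ∃ k, u = List.replicate k .a ++ [.b, .x l] := by
  intro u
  induction u with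
  | nil => intro h; exact absurd h (by simp [nf])
  | cons g u ih =>
      intro h
      cases g with
      | b =>
          have h' : SGen.b :: nf u = [.b, .x l] := h
          have : nf u = [.x l] := by simpa using h'
          have := nf_eq_x l u this
          exact ⟨0, by simp [this]⟩
      | x m =>
          have h' : SGen.x m :: nf u = [.b, .x l] := h
          simp at h'
      | y m =>
          have h' : SGen.y m :: nf u = [.b, .x l] := h
          simp at h'
      | a =>
          have h' : cons' .a (nf u) = [.b, .x l] := h
          have hnf : nf u = [.b, .x l] := by
            revert h'
            match hm : nf u with
            | [] => intro h'; simp [cons'] at h'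
            | [g'] => intro h'; cases g' <;> simp [cons'] at h'
            | .a :: g'' :: u'' => intro h'; simp [cons'] at h'
            | .x m :: g'' :: u'' => intro h'; simp [cons'] at h'
            | .y m :: g'' :: u'' => intro h'; simp [cons'] at h'
            | .b :: .a :: u'' => intro h'; simp [cons'] at h'
            | .b :: .b :: u'' => intro h'; simp [cons'] at h'
            | .b :: .x m :: u'' =>
                intro h'
                have : (SGen.b :: .x m :: u'' : List SGen) = [.b, .x l] := h'
                exact this
            | .b :: .y m :: u'' => intro h'; simp [cons'] at h'
          obtain ⟨k, hk⟩ := ih hnf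
          exact ⟨k + 1, by simp [hk, List.replicate_succ]⟩

lemma prefix_lemma (l : ℤ) : ∀ (k : ℕ) (t₁ t₂ : List SGen),
    t₁ ++ t₂ = List.replicate k .a ++ [.b, .x l] →
    (∃ j, t₁ = List.replicate j .a) ∨ (∃ j, t₁ = List.replicate j .a ++ [.b]) ∨
      (∃ j, t₁ = List.replicate j .a ++ [.b, .x l]) := by
  intro k
  induction k with
  | zero =>
      intro t₁ t₂ h
      simp only [List.replicate_zero, List.nil_append] at h
      match t₁, h with
      | [], _ => exact Or.inl ⟨0, rfl⟩
      | [g], h =>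
          simp only [List.cons_append, List.cons.injEq] at h
          exact Or.inr (Or.inl ⟨0, by simp [h.1]⟩)
      | g :: g' :: t₁', h =>
          simp only [List.cons_append, List.cons.injEq] at h
          obtain ⟨h1, h2, h3⟩ := h
          have : t₁' = [] := by
            cases t₁' with
            | nil => rfl
            | cons _ _ => simp at h3
          subst this h1 h2
          exact Or.inr (Or.inr ⟨0, rfl⟩)
  | succ k ih =>
      intro t₁ t₂ h
      rw [List.replicate_succ, List.cons_append] at h
      match t₁, h with
      | [], _ => exact Or.inl ⟨0, rfl⟩
      | g :: t₁', h =>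
          simp only [List.cons_append, List.cons.injEq] at h
          obtain ⟨h1, h2⟩ := h
          subst h1
          rcases ih t₁' t₂ h2 with ⟨j, hj⟩ | ⟨j, hj⟩ | ⟨j, hj⟩
          · exact Or.inl ⟨j + 1, by simp [hj, List.replicate_succ]⟩
          · exact Or.inr (Or.inl ⟨j + 1, by simp [hj, List.replicate_succ]⟩)
          · exact Or.inr (Or.inr ⟨j + 1, by simp [hj, List.replicate_succ]⟩)

lemma ofList_replicate (j : ℕ) :
    FreeMonoid.ofList (List.replicate j SGen.a) = (FreeMonoid.of SGen.a) ^ j := by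
  induction j with
  | zero => rfl
  | succ j ih => rw [List.replicate_succ, FreeMonoid.ofList_cons, ih, pow_succ']

lemma mk_pow (j : ℕ) :
    PresentedMonoid.mk SRel ((FreeMonoid.of SGen.a) ^ j) = gen .a ^ j := by
  rw [map_pow]; rfl

lemma abx (l : ℤ) : gen .a * (gen .b * gen (.x l)) = gen .b * gen (.x l) := by
  show PresentedMonoid.mk SRel (.of .a * (.of .b * .of (.x l))) = PresentedMonoid.mk SRel (.of .b * .of (.x l))
  rw [← mul_assoc]
  exact Quotient.sound (ConGen.Rel.of _ _ (SRel.xr l))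

lemma pow_abx (l : ℤ) (j : ℕ) : gen .a ^ j * (gen .b * gen (.x l)) = gen .b * gen (.x l) := by
  induction j with
  | zero => simp
  | succ j ih => rw [pow_succ', mul_assoc, ih, abx]

theorem S_divisors_of_bx (l : ℤ) (s : S) (h : gen .b * gen (.x l) ∈ rIdeal s) :
    (∃ k : ℕ, s = gen .a ^ k) ∨ (∃ k : ℕ, s = gen .a ^ k * gen .b) ∨
      s = gen .b * gen (.x l) := by
  obtain ⟨u, hu⟩ := h
  obtain ⟨w, rfl⟩ := Quotient.exists_rep s
  obtain ⟨v, rfl⟩ := Quotient.exists_rep u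
  have hcon : conGen SRel (.of .b * .of (.x l)) (w * v) := Quotient.exact hu
  have hnf : nf (w * v).toList = [.b, .x l] := (nf_eq_of_conGen hcon).symm
  obtain ⟨k, hk⟩ := nf_eq_bx l (w * v).toList hnf
  rw [FreeMonoid.toList_mul] at hk
  rcases prefix_lemma l k w.toList v.toList hk with ⟨j, hj⟩ | ⟨j, hj⟩ | ⟨j, hj⟩
  · left
    refine ⟨j, ?_⟩
    have : w = FreeMonoid.ofList (List.replicate j .a) := by
      rw [← hj]; rfl
    rw [this, ofList_replicate]
    exact mk_pow j
  · right; left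
    refine ⟨j, ?_⟩
    have : w = FreeMonoid.ofList (List.replicate j .a ++ [.b]) := by
      rw [← hj]; rfl
    show PresentedMonoid.mk SRel w = _
    rw [this, FreeMonoid.ofList_append, ofList_replicate, map_mul, mk_pow]
    rfl
  · right; right
    have : w = FreeMonoid.ofList (List.replicate j .a ++ [.b, .x l]) := by
      rw [← hj]; rfl
    show PresentedMonoid.mk SRel w = _
    rw [this, FreeMonoid.ofList_append, ofList_replicate, map_mul, mk_pow]
    have h2 : PresentedMonoid.mk SRel (FreeMonoid.ofList [.b, .x l]) = gen .b * gen (.x l) := rfl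
    rw [h2, pow_abx]
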